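/- Fix ε ≥ 0 and define, for ρ ∈ ℝ and p_z ∈ (0, 2π): e_ρ(ρ, p_z) = ρ · sin(p_z/2)/(p_z/2) and e_z(ρ, p_z) = ε² p_z + (ρ²/(2 p_z)) · (1 − sin(p_z)/p_z). Then for every ρ ∈ ℝ and p_z ∈ (0, 2π), the Jacobian determinant (∂e_ρ/∂ρ)(∂e_z/∂p_z) − (∂e_ρ/∂p_z)(∂e_z/∂ρ) equals ε² · sin(p_z/2)/(p_z/2) + (2ρ²/p_z³) · (sin(p_z/2) − (p_z/2) cos(p_z/2)). -/

import Mathlib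

/-- The Jacobian determinant of the exponential mapping of the metric `g_ε` on the Heisenberg
group, in cylindrical coordinates. -/
theorem heisenberg_exp_jacobian
    (ε : ℝ) (hε : 0 ≤ ε)
    (eρ ez : ℝ → ℝ → ℝ)
    (heρ : ∀ ρ pz : ℝ, eρ ρ pz = ρ * (Real.sin (pz / 2) / (pz / 2)))
    (hez : ∀ ρ pz : ℝ, ez ρ pz = ε ^ 2 * pz + (ρ ^ 2 / (2 * pz)) * (1 - Real.sin pz / pz)) :
    ∀ ρ : ℝ, ∀ pz ∈ Set.Ioo (0 : ℝ) (2 * Real.pi),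
      deriv (fun r => eρ r pz) ρ * deriv (fun p => ez ρ p) pz -
          deriv (fun p => eρ ρ p) pz * deriv (fun r => ez r pz) ρ =
        ε ^ 2 * (Real.sin (pz / 2) / (pz / 2)) +
          (2 * ρ ^ 2 / pz ^ 3) * (Real.sin (pz / 2) - (pz / 2) * Real.cos (pz / 2)) := by
  intro ρ pz hpz
  have hp : pz ≠ 0 := ne_of_gt hpz.1
  have hp2 : pz / 2 ≠ 0 := by positivity
  have hhalf : HasDerivAt (fun p : ℝ => p / 2) (1 / 2) pz := (hasDerivAt_id pz).div_const 2
  have hsin2 : HasDerivAt (fun p : ℝ => Real.sin (p / 2)) (Real.cos (pz / 2) * (1 / 2)) pz :=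
    by have := (Real.hasDerivAt_sin (pz / 2)).comp pz hhalf; exact this
  -- ∂eρ/∂ρ
  have h1 : deriv (fun r => eρ r pz) ρ = Real.sin (pz / 2) / (pz / 2) := by
    simp only [heρ]
    simpa using ((hasDerivAt_id ρ).mul_const (Real.sin (pz / 2) / (pz / 2))).deriv
  -- ∂eρ/∂pz
  have h2 : deriv (fun p => eρ ρ p) pz =
      ρ * ((Real.cos (pz / 2) * (1 / 2) * (pz / 2) - Real.sin (pz / 2) * (1 / 2)) / (pz / 2) ^ 2) := by
    simp only [heρ]
    exact ((hsin2.div hhalf hp2).const_mul ρ).deriv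
  -- ∂ez/∂ρ
  have h3 : deriv (fun r => ez r pz) ρ =
      2 * ρ / (2 * pz) * (1 - Real.sin pz / pz) := by
    simp only [hez]
    have : HasDerivAt (fun r : ℝ => ε ^ 2 * pz + r ^ 2 / (2 * pz) * (1 - Real.sin pz / pz))
        (2 * ρ ^ 1 / (2 * pz) * (1 - Real.sin pz / pz)) ρ := by
      have hr : HasDerivAt (fun r : ℝ => r ^ 2) (2 * ρ ^ 1) ρ := by simpa using hasDerivAt_pow 2 ρ
      have := ((hr.div_const (2 * pz)).mul_const (1 - Real.sin pz / pz)).const_add (ε ^ 2 * pz)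
      convert this using 1
    simpa using this.deriv
  -- ∂ez/∂pz
  have h4 : deriv (fun p => ez ρ p) pz =
      ε ^ 2 + ((0 * (2 * pz) - ρ ^ 2 * 2) / (2 * pz) ^ 2 * (1 - Real.sin pz / pz)
        + ρ ^ 2 / (2 * pz) * (0 - (Real.cos pz * pz - Real.sin pz * 1) / pz ^ 2)) := by
    simp only [hez]
    have hA : HasDerivAt (fun p : ℝ => ε ^ 2 * p) (ε ^ 2) pz := by
      simpa using (hasDerivAt_id pz).const_mul (ε ^ 2)
    have hB : HasDerivAt (fun p : ℝ => ρ ^ 2 / (2 * p))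
        ((0 * (2 * pz) - ρ ^ 2 * 2) / (2 * pz) ^ 2) pz := by
      have h2p : HasDerivAt (fun p : ℝ => 2 * p) 2 pz := by
        simpa using (hasDerivAt_id pz).const_mul (2 : ℝ)
      exact (hasDerivAt_const pz (ρ ^ 2)).div h2p (by simpa using hp)
    have hC : HasDerivAt (fun p : ℝ => 1 - Real.sin p / p)
        (0 - (Real.cos pz * pz - Real.sin pz * 1) / pz ^ 2) pz :=
      (hasDerivAt_const pz (1 : ℝ)).sub ((Real.hasDerivAt_sin pz).div (hasDerivAt_id pz) hp)
    exact (hA.add (hB.mul hC)).deriv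
  rw [h1, h2, h3, h4]
  have hs : Real.sin pz = 2 * Real.sin (pz / 2) * Real.cos (pz / 2) := by
    rw [← Real.sin_two_mul]; ring_nf
  have hc : Real.cos pz = 1 - 2 * Real.sin (pz / 2) ^ 2 := by
    have h1' := Real.cos_two_mul (pz / 2)
    have h2' := Real.sin_sq_add_cos_sq (pz / 2)
    rw [show 2 * (pz / 2) = pz from by ring] at h1'
    linarith
  rw [hs, hc]
  field_simp
  linear_combination (2 * pz * ρ ^ 2 * Real.sin (pz / 2)) *
    Real.sin_sq_add_cos_sq (pz / 2)
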